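/- Let D be an integral domain, let a, b be nonzero elements of D, and let ⋆ be a semistar operation on D. Then (aD ∩ bD)^⋆ is an ideal of ⋆-finite type if and only if (((a,b)D)^{-1})^⋆ is a fractional ideal of ⋆-finite type. -/

import Mathlib

open Pointwise

section Preamble

variable (D : Type*) [CommRing D] [IsDomain D]
variable (K : Type*) [Field K] [Algebra D K] [IsFractionRing D K]

/-- The localization `D_P` of `D` at a prime `P`, as a subalgebra of the quotient field. -/
noncomputable def locAt (P : Ideal D) (hP : P.IsPrime) : Subalgebra D K :=
  Localization.subalgebra K P.primeCompl
    (fun x hx => mem_nonZeroDivisors_of_ne_zero (fun h0 : x = 0 => hx (h0 ▸ P.zero_mem)))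

/-- `D_P` as a `D`-submodule of the quotient field. -/
noncomputable def locAtM (P : Ideal D) (hP : P.IsPrime) : Submodule D K :=
  Subalgebra.toSubmodule (locAt D K P hP)

variable {D K}

/-- `E` is finitely generated as a module over the subring corresponding to `Rm`. -/
def IsRFG (Rm E : Submodule D K) : Prop :=
  ∃ F₀ : Submodule D K, F₀.FG ∧ F₀ ≠ ⊥ ∧ E = F₀ * Rm

/-- `s` is a semistar operation on the subring corresponding to `Rm`
(on `D` itself when `Rm = 1`): it is defined on the nonzero `Rm`-submodules of `K`. -/
def IsSemistar (Rm : Submodule D K) (s : Submodule D K → Submodule D K) : Prop :=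
  (∀ E, E ≠ ⊥ → Rm * E ≤ E → Rm * s E ≤ s E) ∧
  (∀ (x : K) (E), x ≠ 0 → E ≠ ⊥ → Rm * E ≤ E → s (x • E) = x • s E) ∧
  (∀ E F, E ≠ ⊥ → F ≠ ⊥ → Rm * E ≤ E → Rm * F ≤ F → E ≤ F → s E ≤ s F) ∧
  (∀ E, E ≠ ⊥ → Rm * E ≤ E → E ≤ s E) ∧
  (∀ E, E ≠ ⊥ → Rm * E ≤ E → s (s E) = s E)

/-- `s` is of finite type. -/
def IsFiniteType (Rm : Submodule D K) (s : Submodule D K → Submodule D K) : Prop :=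
  ∀ E, E ≠ ⊥ → Rm * E ≤ E → s E = sSup {G | ∃ F, IsRFG Rm F ∧ F ≤ E ∧ G = s F}

/-- `s` is a.b. -/
def IsAB (Rm : Submodule D K) (s : Submodule D K → Submodule D K) : Prop :=
  ∀ F G H : Submodule D K, IsRFG Rm F → G ≠ ⊥ → Rm * G ≤ G → H ≠ ⊥ → Rm * H ≤ H →
    s (F * G) ≤ s (F * H) → s G ≤ s H

/-- `s` is e.a.b. -/
def IsEAB (Rm : Submodule D K) (s : Submodule D K → Submodule D K) : Prop :=
  ∀ F G H : Submodule D K, IsRFG Rm F → IsRFG Rm G → IsRFG Rm H →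
    s (F * G) ≤ s (F * H) → s G ≤ s H

/-- `s` is stable. -/
def IsStable (Rm : Submodule D K) (s : Submodule D K → Submodule D K) : Prop :=
  ∀ E F, E ≠ ⊥ → F ≠ ⊥ → Rm * E ≤ E → Rm * F ≤ F → s (E ⊓ F) = s E ⊓ s F

/-- The divisorial closure `E ↦ (R : (R : E))` over the subring corresponding to `Rm`. -/
def vOp (Rm E : Submodule D K) : Submodule D K := Rm / (Rm / E)

/-- The `t`-operation over the subring corresponding to `Rm`. -/
def tOp (Rm E : Submodule D K) : Submodule D K :=
  sSup {G | ∃ F, IsRFG Rm F ∧ F ≤ E ∧ G = vOp Rm F}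

end Preamble

variable {D : Type*} [CommRing D] [IsDomain D]
variable {K : Type*} [Field K] [Algebra D K] [IsFractionRing D K]

private lemma mem_smul_iff {c : K} (hc : c ≠ 0) {S : Submodule D K} {x : K} :
    x ∈ c • S ↔ c⁻¹ * x ∈ S := by
  constructor
  · intro h
    have := Submodule.smul_mem_pointwise_smul _ c⁻¹ _ h
    rw [smul_smul, inv_mul_cancel₀ hc, one_smul] at this
    exact this
  · intro h
    have := Submodule.smul_mem_pointwise_smul _ c _ h
    rwa [show c • (c⁻¹ * x) = x by rw [smul_eq_mul, ← mul_assoc, mul_inv_cancel₀ hc, one_mul]] at this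

private lemma smul_fg {c : K} {F : Submodule D K} (hF : F.FG) : (c • F).FG := by
  classical
  obtain ⟨t, rfl⟩ := hF
  refine ⟨t.image (c • ·), ?_⟩
  rw [Finset.coe_image, Set.image_smul, Submodule.span_smul]

private lemma smul_ne_bot {c : K} (hc : c ≠ 0) {F : Submodule D K} (hF : F ≠ ⊥) :
    c • F ≠ ⊥ := by
  intro h
  apply hF
  have := congrArg (fun S : Submodule D K => c⁻¹ • S) h
  simpa [smul_smul, inv_mul_cancel₀ hc] using this

private lemma smul_helper (s : Submodule D K → Submodule D K)
    (hs : IsSemistar (1 : Submodule D K) s) (c : K) (hc : c ≠ 0) (X : Submodule D K)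
    (h : ∃ F : Submodule D K, F.FG ∧ F ≠ ⊥ ∧ s F = X) :
    ∃ F : Submodule D K, F.FG ∧ F ≠ ⊥ ∧ s F = c • X := by
  obtain ⟨F, hFG, hF0, hsF⟩ := h
  exact ⟨c • F, smul_fg hFG, smul_ne_bot hc hF0,
    by rw [hs.2.1 c F hc hF0 (one_mul F).le, hsF]⟩

/-- `(aD ∩ bD)^⋆` is of `⋆`-finite type iff `(((a,b)D)⁻¹)^⋆` is of
`⋆`-finite type. -/
theorem stmt1 (s : Submodule D K → Submodule D K) (hs : IsSemistar (1 : Submodule D K) s)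
    (a b : D) (ha : a ≠ 0) (hb : b ≠ 0) :
    (∃ F : Submodule D K, F.FG ∧ F ≠ ⊥ ∧
        s F = s (Submodule.span D {algebraMap D K a} ⊓ Submodule.span D {algebraMap D K b})) ↔
      (∃ F : Submodule D K, F.FG ∧ F ≠ ⊥ ∧
        s F = s ((1 : Submodule D K) / Submodule.span D {algebraMap D K a, algebraMap D K b})) := by
  set α := algebraMap D K a with hαdef
  set β := algebraMap D K b with hβdef
  have hinj := IsFractionRing.injective D K
  have hα : α ≠ 0 := fun h => ha (by simpa using (map_eq_zero_iff _ hinj).mp h)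
  have hβ : β ≠ 0 := fun h => hb (by simpa using (map_eq_zero_iff _ hinj).mp h)
  have hαβ : α * β ≠ 0 := mul_ne_zero hα hβ
  set E : Submodule D K := (1 : Submodule D K) / Submodule.span D {α, β} with hEdef
  -- 1 ∈ E
  have h1E : (1 : K) ∈ E := by
    rw [hEdef, Submodule.mem_div_iff_forall_mul_mem]
    intro y hy
    rw [one_mul]
    refine Submodule.span_le.mpr ?_ hy
    rintro z (rfl | rfl)
    · exact Submodule.algebraMap_mem a
    · exact Submodule.algebraMap_mem b
  have hE0 : E ≠ ⊥ := fun h => one_ne_zero ((Submodule.mem_bot D).mp (h ▸ h1E))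
  -- key: aD ⊓ bD = (αβ) • E
  have key : Submodule.span D {α} ⊓ Submodule.span D {β} = (α * β) • E := by
    apply le_antisymm
    · rintro x ⟨hxa, hxb⟩
      obtain ⟨u, hu⟩ := Submodule.mem_span_singleton.mp hxa
      obtain ⟨v, hv⟩ := Submodule.mem_span_singleton.mp hxb
      rw [mem_smul_iff hαβ, hEdef, Submodule.mem_div_iff_forall_mul_mem]
      intro z hz
      induction hz using Submodule.span_induction with
      | mem z hz =>
        rcases hz with rfl | rfl
        · refine Submodule.mem_one.mpr ⟨v, ?_⟩
          have hx' : x = algebraMap D K v * β := by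
            rw [← hv]; simp [Algebra.smul_def]
          rw [hx']
          field_simp
        · refine Submodule.mem_one.mpr ⟨u, ?_⟩
          have hx' : x = algebraMap D K u * α := by
            rw [← hu]; simp [Algebra.smul_def]
          rw [hx']
          field_simp
      | zero => simpa using Submodule.zero_mem _
      | add z w _ _ hz hw => simpa [mul_add] using Submodule.add_mem _ hz hw
      | smul d z _ hz => rw [mul_smul_comm]; exact Submodule.smul_mem _ d hz
    · rintro x hx
      rw [mem_smul_iff hαβ] at hx
      set y := (α * β)⁻¹ * x with hydef
      rw [hEdef, Submodule.mem_div_iff_forall_mul_mem] at hx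
      have hyα : y * α ∈ (1 : Submodule D K) :=
        hx α (Submodule.subset_span (Set.mem_insert _ _))
      have hyβ : y * β ∈ (1 : Submodule D K) :=
        hx β (Submodule.subset_span (Set.mem_insert_of_mem _ rfl))
      obtain ⟨u, hu⟩ := Submodule.mem_one.mp hyα
      obtain ⟨v, hv⟩ := Submodule.mem_one.mp hyβ
      have hxy : x = α * β * y := by
        rw [hydef]; field_simp
      constructor
      · refine Submodule.mem_span_singleton.mpr ⟨v, ?_⟩
        rw [Algebra.smul_def, hv, hxy]; ring
      · refine Submodule.mem_span_singleton.mpr ⟨u, ?_⟩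
        rw [Algebra.smul_def, hu, hxy]; ring
  have hsinter : s (Submodule.span D {α} ⊓ Submodule.span D {β}) = (α * β) • s E := by
    rw [key, hs.2.1 _ _ hαβ hE0 (one_mul E).le]
  constructor
  · intro h
    have h' := smul_helper s hs (α * β)⁻¹ (inv_ne_zero hαβ) _ h
    rw [hsinter, smul_smul, inv_mul_cancel₀ hαβ, one_smul] at h'
    exact h'
  · intro h
    have h' := smul_helper s hs (α * β) hαβ _ h
    rw [← hsinter] at h'
    exact h'
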